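/- For every 0 ≤ r < 1 and every z ∈ ℂ with |z| ≤ r, the real part of ρ(z) satisfies 1 - arcsinh(r) ≤ Re(ρ(z)) ≤ 1 + arcsinh(r), where arcsinh(r) = Real.arsinh r. -/

import Mathlib

open Complex

/-- Principal branch of the complex inverse hyperbolic sine. -/
noncomputable def carcsinh (z : ℂ) : ℂ := Complex.log (z + (1 + z ^ 2) ^ ((1 : ℂ) / 2))

/-- The function `ρ(z) = 1 + arcsinh z`. -/
noncomputable def ρ (z : ℂ) : ℂ := 1 + carcsinh z

/-- For `0 ≤ r < 1` and `|z| ≤ r`, one has `1 - arcsinh r ≤ Re (ρ z) ≤ 1 + arcsinh r`. -/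
theorem re_rho_bounds (r : ℝ) (hr0 : 0 ≤ r) (hr1 : r < 1)
    (z : ℂ) (hz : ‖z‖ ≤ r) :
    1 - Real.arsinh r ≤ (ρ z).re ∧ (ρ z).re ≤ 1 + Real.arsinh r := by
  set u : ℂ := 1 + z ^ 2 with hu
  have habsz2 : ‖z‖ ^ 2 ≤ r ^ 2 := pow_le_pow_left₀ (norm_nonneg z) hz 2
  have hune : u ≠ 0 := by
    intro h
    have h1 : (1 : ℝ) ≤ ‖z ^ 2‖ := by
      have : z ^ 2 = -1 := by linear_combination h
      rw [this]; simp
    have : ‖z ^ 2‖ < 1 := by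
      rw [norm_pow]
      nlinarith
    linarith
  set s : ℂ := u ^ ((1 : ℂ) / 2) with hs
  have hs2 : s ^ 2 = u := by
    rw [hs, Complex.cpow_def_of_ne_zero hune, sq, ← Complex.exp_add]
    rw [show Complex.log u * (1/2) + Complex.log u * (1/2) = Complex.log u by ring]
    exact Complex.exp_log hune
  have habs_s : ‖s‖ = Real.sqrt (‖u‖) := by
    rw [hs, Complex.norm_cpow_of_ne_zero hune]
    simp [Real.sqrt_eq_rpow]
  have habsu : ‖u‖ ≤ 1 + r ^ 2 := by
    calc ‖u‖ ≤ ‖(1:ℂ)‖ + ‖z ^ 2‖ := norm_add_le _ _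
    _ ≤ 1 + r ^ 2 := by rw [norm_pow]; simp; linarith
  have hsqrt_pos : (0:ℝ) < Real.sqrt (1 + r ^ 2) := Real.sqrt_pos.2 (by positivity)
  have hsle : ‖s‖ ≤ Real.sqrt (1 + r ^ 2) := by
    rw [habs_s]; exact Real.sqrt_le_sqrt habsu
  have hprod : (z + s) * (s - z) = 1 := by linear_combination hs2
  have hwne : z + s ≠ 0 := by
    intro h; rw [h, zero_mul] at hprod; exact one_ne_zero hprod.symm
  have hwpos : 0 < ‖z + s‖ := norm_pos_iff.mpr hwne
  have hAup : ‖z + s‖ ≤ r + Real.sqrt (1 + r ^ 2) := by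
    calc ‖z + s‖ ≤ ‖z‖ + ‖s‖ := norm_add_le _ _
    _ ≤ r + Real.sqrt (1 + r ^ 2) := add_le_add hz hsle
  have hBup : ‖s - z‖ ≤ Real.sqrt (1 + r ^ 2) + r := by
    calc ‖s - z‖ ≤ ‖s‖ + ‖z‖ := by simpa [sub_eq_add_neg] using norm_add_le s (-z)
    _ ≤ Real.sqrt (1 + r ^ 2) + r := add_le_add hsle hz
  have hone : ‖z + s‖ * ‖s - z‖ = 1 := by
    rw [← norm_mul, hprod]; simp
  have hpos2 : (0:ℝ) < Real.sqrt (1 + r ^ 2) + r := by linarith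
  have hAlo : Real.sqrt (1 + r ^ 2) - r ≤ ‖z + s‖ := by
    have hsq : Real.sqrt (1 + r ^ 2) ^ 2 = 1 + r ^ 2 := Real.sq_sqrt (by positivity)
    have h1 : (Real.sqrt (1 + r ^ 2) - r) * (Real.sqrt (1 + r ^ 2) + r) = 1 := by
      nlinarith
    have h2 : 1 ≤ ‖z + s‖ * (Real.sqrt (1 + r ^ 2) + r) := by
      calc (1:ℝ) = ‖z + s‖ * ‖s - z‖ := hone.symm
      _ ≤ ‖z + s‖ * (Real.sqrt (1 + r ^ 2) + r) :=
          mul_le_mul_of_nonneg_left hBup hwpos.le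
    nlinarith [h2, h1, hpos2, hwpos]
  have hre : (ρ z).re = 1 + Real.log (‖z + s‖) := by
    simp [ρ, carcsinh, Complex.log_re, ← hu]
    rw [hs, one_div]
  have harsinh : Real.arsinh r = Real.log (r + Real.sqrt (1 + r ^ 2)) := rfl
  have hneg : Real.log (Real.sqrt (1 + r ^ 2) - r) = - Real.arsinh r := by
    have hsq : Real.sqrt (1 + r ^ 2) ^ 2 = 1 + r ^ 2 := Real.sq_sqrt (by positivity)
    have h1 : Real.sqrt (1 + r ^ 2) - r = (r + Real.sqrt (1 + r ^ 2))⁻¹ := by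
      exact eq_inv_of_mul_eq_one_left (by nlinarith)
    rw [h1, Real.log_inv, harsinh]
  constructor
  · rw [hre]
    have : Real.log (Real.sqrt (1 + r ^ 2) - r) ≤ Real.log (‖z + s‖) := by
      apply Real.log_le_log (by nlinarith [Real.sq_sqrt (show (0:ℝ) ≤ 1 + r^2 by positivity), Real.sqrt_nonneg (1+r^2)]) hAlo
    rw [hneg] at this; linarith
  · rw [hre]
    have : Real.log (‖z + s‖) ≤ Real.log (r + Real.sqrt (1 + r ^ 2)) := by
      apply Real.log_le_log hwpos; linarith
    rw [← harsinh] at this; linarith
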